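/- A maximally correlated state ρ = Σ_{i,j} c_{ij} |ii⟩⟨jj| on C^d ⊗ C^d is separable if and only if the matrix (c_{ij}) is diagonal, i.e., c_{ij} = 0 for i ≠ j. -/

import Mathlib

open Matrix
open scoped ComplexOrder

/-- The rank-one product projector |u⟩⟨u| ⊗ |v⟩⟨v|. -/
noncomputable def prodProj {a b : Type*} (u : a → ℂ) (v : b → ℂ) :
    Matrix (a × b) (a × b) ℂ :=
  fun x y => (u x.1 * v x.2) * star (u y.1 * v y.2)

/-- ρ is separable: a finite convex combination of pure product states. -/
def SeparableState {a b : Type*} [Fintype a] [Fintype b]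
    (ρ : Matrix (a × b) (a × b) ℂ) : Prop :=
  ∃ (n : ℕ) (p : Fin n → ℝ) (u : Fin n → a → ℂ) (v : Fin n → b → ℂ),
    (∀ i, 0 ≤ p i) ∧ (∑ i, p i = 1) ∧
    ρ = ∑ i, (p i : ℂ) • prodProj (u i) (v i)

/-- The maximally correlated state ρ = Σ_{i,j} c_{ij} |ii⟩⟨jj|. -/
noncomputable def maxCorr {d : ℕ} (c : Matrix (Fin d) (Fin d) ℂ) :
    Matrix (Fin d × Fin d) (Fin d × Fin d) ℂ :=
  fun p q => if p.2 = p.1 ∧ q.2 = q.1 then c p.1 q.1 else 0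

/-- Diagonal entries of a PSD matrix are nonnegative reals. -/
lemma psd_diag_real {d : ℕ} {c : Matrix (Fin d) (Fin d) ℂ} (hc : c.PosSemidef) (i : Fin d) :
    0 ≤ (c i i).re ∧ c i i = ((c i i).re : ℂ) := by
  have h : (0 : ℂ) ≤ c i i := hc.diag_nonneg
  have h0 : (0 : ℂ) ≤ c i i := by
    simpa [dotProduct, Matrix.mulVec, Pi.single_apply] using h
  obtain ⟨h1, h2⟩ := Complex.le_def.mp h0
  refine ⟨by simpa using h1, ?_⟩
  apply Complex.ext
  · simp
  · simpa using h2.symm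

/-- A maximally correlated state Σ_{i,j} c_{ij}|ii⟩⟨jj| is separable if and only if the
matrix (c_{ij}) is diagonal. -/
theorem maxCorr_separable_iff_diagonal {d : ℕ}
    (c : Matrix (Fin d) (Fin d) ℂ) (hc : c.PosSemidef) (htr : c.trace = 1) :
    SeparableState (maxCorr c) ↔ ∀ i j, i ≠ j → c i j = 0 := by
  constructor
  · rintro ⟨n, p, u, v, hp, hsum, hρ⟩ i j hij
    -- The (i,j),(i,j) diagonal entry of ρ vanishes.
    have h0 : maxCorr c (i, j) (i, j) = 0 := by
      simp [maxCorr, Ne.symm hij]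
    rw [hρ] at h0
    simp only [Matrix.sum_apply, Matrix.smul_apply, prodProj, smul_eq_mul] at h0
    have h0' : ∑ k, ((p k * Complex.normSq (u k i * v k j) : ℝ) : ℂ) = 0 := by
      rw [← h0]
      refine Finset.sum_congr rfl fun k _ => ?_
      rw [RCLike.star_def, Complex.mul_conj]
      push_cast
      ring
    have hR : ∑ k, p k * Complex.normSq (u k i * v k j) = 0 := by
      exact_mod_cast h0'
    have hzero : ∀ k, p k * Complex.normSq (u k i * v k j) = 0 := by
      intro k
      exact (Finset.sum_eq_zero_iff_of_nonneg (fun k _ =>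
        mul_nonneg (hp k) (Complex.normSq_nonneg _))).mp hR k (Finset.mem_univ k)
    have hcij : c i j = maxCorr c (i, i) (j, j) := by simp [maxCorr]
    rw [hcij, hρ]
    simp only [Matrix.sum_apply, Matrix.smul_apply, prodProj, smul_eq_mul]
    refine Finset.sum_eq_zero fun k _ => ?_
    rcases mul_eq_zero.mp (hzero k) with h | h
    · simp [h]
    · rcases mul_eq_zero.mp (Complex.normSq_eq_zero.mp h) with h' | h'
      · simp [h']
      · simp [h']
  · intro hdiag
    have him : ∀ i, c i i = ((c i i).re : ℂ) := fun i => (psd_diag_real hc i).2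
    refine ⟨d, fun i => (c i i).re, fun i k => if k = i then 1 else 0,
      fun i k => if k = i then 1 else 0, fun i => (psd_diag_real hc i).1, ?_, ?_⟩
    · have : (↑(∑ i, (c i i).re) : ℂ) = 1 := by
        push_cast
        rw [← htr]
        unfold Matrix.trace
        exact Finset.sum_congr rfl fun i _ => (him i).symm
      exact_mod_cast this
    · funext x y
      simp only [Matrix.sum_apply, Matrix.smul_apply, prodProj, smul_eq_mul, maxCorr]
      rw [Finset.sum_eq_single x.1]
      · by_cases h2 : x.2 = x.1
        · by_cases h3 : y.1 = x.1
          · by_cases h4 : y.2 = x.1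
            · have hy : y.2 = y.1 := h4.trans h3.symm
              simp only [h2, h3, h4, hy, and_self, if_true, mul_one, one_mul, star_one]
              exact him x.1
            · have hy : y.2 ≠ y.1 := fun h => h4 (h.trans h3)
              simp [h2, h3, h4, hy]
          · by_cases hy : y.2 = y.1
            · simp [h2, h3, hy, hdiag x.1 y.1 (fun h => h3 h.symm)]
            · simp [h2, h3, hy]
        · simp [h2]
      · intro k _ hk
        simp [Ne.symm hk]
      · simp
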